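/- If G is a torsion-free CSA group, then every solvable subgroup of G is abelian. -/

import Mathlib

/-- A subgroup `K` of `G` is malnormal if `gKg⁻¹ ∩ K = {1}` for every `g ∉ K`. -/
def Malnormal {G : Type*} [Group G] (K : Subgroup G) : Prop :=
  ∀ g : G, g ∉ K → ∀ x : G, x ∈ K → g * x * g⁻¹ ∈ K → x = 1

/-- Every commutative subgroup is contained in a maximal commutative subgroup. -/
lemma exists_maximal_commutative {G : Type*} [Group G] (A : Subgroup G)
    (hA : IsMulCommutative A) :
    ∃ M : Subgroup G, A ≤ M ∧ IsMulCommutative M ∧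
      ∀ N : Subgroup G, IsMulCommutative N → M ≤ N → M = N := by
  obtain ⟨M, hAM, hMs, hMmax⟩ := zorn_le_nonempty₀ {K : Subgroup G | IsMulCommutative K}
    (fun c hcs hc y hy => by
      refine ⟨sSup c, ?_, fun z hz => le_sSup hz⟩
      have hdir : DirectedOn (· ≤ ·) c := hc.directedOn
      constructor
      constructor
      rintro ⟨x, hx⟩ ⟨z, hz⟩
      obtain ⟨K1, hK1, hxK1⟩ := (Subgroup.mem_sSup_of_directedOn ⟨y, hy⟩ hdir).mp hx
      obtain ⟨K2, hK2, hzK2⟩ := (Subgroup.mem_sSup_of_directedOn ⟨y, hy⟩ hdir).mp hz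
      obtain ⟨K, hKc, h1K, h2K⟩ := hdir K1 hK1 K2 hK2
      have := (hcs hKc).is_comm.comm ⟨x, h1K hxK1⟩ ⟨z, h2K hzK2⟩
      have h2 : x * z = z * x := by simpa using Subtype.ext_iff.mp this
      exact Subtype.ext (by simpa using h2)) A hA
  exact ⟨M, hAM, hMs, fun N hN hMN => le_antisymm hMN (hMmax hN hMN)⟩

/-- Old Mathlib's `Monoid.IsTorsionFree` (removed), with its original definition. -/
def Monoid.IsTorsionFree (G : Type*) [Monoid G] : Prop :=
  ∀ g : G, g ≠ 1 → ¬IsOfFinOrder g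

open scoped commutatorElement

/-- In a torsion-free CSA group, every solvable subgroup is abelian. -/
theorem torsionfree_csa_solvable_subgroup_abelian {G : Type*} [Group G]
    (htf : Monoid.IsTorsionFree G)
    (hCSA : ∀ M : Subgroup G, IsMulCommutative M →
      (∀ N : Subgroup G, IsMulCommutative N → M ≤ N → M = N) → Malnormal M)
    (H : Subgroup G) (hH : IsSolvable H) :
    ∀ a b : G, a ∈ H → b ∈ H → Commute a b := by
  classical
  intro a b ha hb
  have hsolv : ∃ n, derivedSeries ↥H n = ⊥ := (isSolvable_def ↥H).mp hH
  obtain ⟨n, hbot, hmin⟩ : ∃ n, derivedSeries ↥H n = ⊥ ∧ ∀ m < n, derivedSeries ↥H m ≠ ⊥ :=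
    ⟨Nat.find hsolv, Nat.find_spec hsolv, fun m hm => Nat.find_min hsolv hm⟩
  cases n with
  | zero =>
    have htriv : (⊤ : Subgroup ↥H) = ⊥ := hbot
    have ha1 : a = 1 := by
      have : (⟨a, ha⟩ : ↥H) ∈ (⊥ : Subgroup ↥H) := htriv ▸ Subgroup.mem_top _
      simpa using congrArg Subtype.val (Subgroup.mem_bot.mp this)
    simp [ha1, Commute, SemiconjBy]
  | succ m =>
    set A' : Subgroup ↥H := derivedSeries ↥H m with hA'
    have hA'ne : A' ≠ ⊥ := hmin m (Nat.lt_succ_self m)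
    have hcomm' : ∀ x y : ↥H, x ∈ A' → y ∈ A' → x * y = y * x := by
      intro x y hx hy
      have hmem : ⁅x, y⁆ ∈ (⊥ : Subgroup ↥H) := by
        rw [← hbot, derivedSeries_succ]
        exact Subgroup.commutator_mem_commutator hx hy
      exact commutatorElement_eq_one_iff_mul_comm.mp (Subgroup.mem_bot.mp hmem)
    set A : Subgroup G := A'.map H.subtype with hAdef
    have hAcomm : IsMulCommutative A := by
      constructor
      constructor
      rintro ⟨x, hx⟩ ⟨y, hy⟩
      obtain ⟨x', hx', rfl⟩ := hx
      obtain ⟨y', hy', rfl⟩ := hy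
      have := hcomm' x' y' hx' hy'
      exact Subtype.ext (by simpa using congrArg Subtype.val this)
    have hconj : ∀ h : G, h ∈ H → ∀ x : G, x ∈ A → h * x * h⁻¹ ∈ A := by
      intro h hh x hx
      obtain ⟨x', hx', rfl⟩ := hx
      exact ⟨⟨h, hh⟩ * x' * ⟨h, hh⟩⁻¹,
        (derivedSeries_normal _ _).conj_mem x' hx' ⟨h, hh⟩, by simp⟩
    obtain ⟨x0', hx0'⟩ := Subgroup.ne_bot_iff_exists_ne_one.mp hA'ne
    have hx0A : (H.subtype x0' : G) ∈ A := ⟨x0', x0'.2, rfl⟩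
    have hx0ne : (H.subtype x0' : G) ≠ 1 := fun h1 =>
      hx0' (Subtype.ext (Subtype.ext h1))
    obtain ⟨M, hAM, hMcomm, hMmax⟩ := exists_maximal_commutative A hAcomm
    have hmal := hCSA M hMcomm hMmax
    have hmem : ∀ h, h ∈ H → h ∈ M := by
      intro h hh
      by_contra hhM
      exact hx0ne (hmal h hhM _ (hAM hx0A) (hAM (hconj h hh _ hx0A)))
    have := hMcomm.is_comm.comm ⟨a, hmem a ha⟩ ⟨b, hmem b hb⟩
    exact congrArg Subtype.val this
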